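/- Let z ∈ ℝⁿ with 0 < z₁ ≤ … ≤ zₙ and θ > 0. For k = 1, the condition θ²(k z_{k}² − b_k z_k) ≤ 1 is automatic (the left side is 0), so whenever θ > 1/√(z₂² − z₁z₂) (assuming z₁ < z₂), the minimizer of θwᵀz − log(wᵀ1) + ½‖w‖² over w ≥ 0 has exactly one nonzero entry, equal to λ* − θz₁ with λ* = (θz₁ + √(θ²z₁² + 4))/2. -/

import Mathlib

lemma log_midpoint (x y : ℝ) (hx : 0 < x) (hy : 0 < y) :
    (Real.log x + Real.log y) / 2 ≤ Real.log ((x + y) / 2) := by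
  have h := (strictConcaveOn_log_Ioi.concaveOn).2 (Set.mem_Ioi.2 hx) (Set.mem_Ioi.2 hy)
    (by norm_num : (0:ℝ) ≤ 1/2) (by norm_num : (0:ℝ) ≤ 1/2) (by norm_num)
  simp only [smul_eq_mul] at h
  have h2 : 1/2 * x + 1/2 * y = (x + y) / 2 := by ring
  rw [h2] at h
  linarith

set_option maxHeartbeats 1000000

theorem stmt_14 (n : ℕ) (hn : 2 ≤ n) (z : ℕ → ℝ)
    (hpos : ∀ i, 1 ≤ i → i ≤ n → 0 < z i)
    (hsort : ∀ i, 1 ≤ i → i < n → z i ≤ z (i + 1))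
    (h12 : z 1 < z 2)
    (θ : ℝ) (hθ : 1 / Real.sqrt (z 2 ^ 2 - z 1 * z 2) < θ)
    (lam : ℝ) (hlam : lam = (θ * z 1 + Real.sqrt (θ ^ 2 * z 1 ^ 2 + 4)) / 2)
    (w : ℕ → ℝ)
    (hwfeas : (∀ i ∈ Finset.Icc 1 n, 0 ≤ w i) ∧ 0 < ∑ i ∈ Finset.Icc 1 n, w i)
    (hwmin : ∀ v : ℕ → ℝ,
      (∀ i ∈ Finset.Icc 1 n, 0 ≤ v i) → 0 < ∑ i ∈ Finset.Icc 1 n, v i →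
      θ * (∑ i ∈ Finset.Icc 1 n, w i * z i) - Real.log (∑ i ∈ Finset.Icc 1 n, w i)
          + (1 / 2) * ∑ i ∈ Finset.Icc 1 n, (w i) ^ 2 ≤
        θ * (∑ i ∈ Finset.Icc 1 n, v i * z i) - Real.log (∑ i ∈ Finset.Icc 1 n, v i)
          + (1 / 2) * ∑ i ∈ Finset.Icc 1 n, (v i) ^ 2) :
    ((Finset.Icc 1 n).filter (fun i => w i ≠ 0)).card = 1 ∧
    w 1 = lam - θ * z 1 := by
  obtain ⟨hw0, hwsum⟩ := hwfeas
  set K := Finset.Icc 1 n with hK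
  have h1K : (1:ℕ) ∈ K := Finset.mem_Icc.2 ⟨le_refl 1, le_trans one_le_two hn⟩
  have hz1 : 0 < z 1 := hpos 1 le_rfl (le_trans one_le_two hn)
  have hz2 : 0 < z 2 := hpos 2 one_le_two hn
  have hE : 0 < z 2 ^ 2 - z 1 * z 2 := by nlinarith
  have hθ0 : 0 < θ := lt_trans (by positivity) hθ
  have hr : Real.sqrt (θ ^ 2 * z 1 ^ 2 + 4) ^ 2 = θ ^ 2 * z 1 ^ 2 + 4 :=
    Real.sq_sqrt (by positivity)
  have hlam_gt : θ * z 1 < lam := by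
    have h1 : θ * z 1 < Real.sqrt (θ ^ 2 * z 1 ^ 2 + 4) := by
      have := Real.sqrt_nonneg (θ ^ 2 * z 1 ^ 2 + 4)
      nlinarith
    rw [hlam]; linarith
  set s := lam - θ * z 1 with hs_def
  clear_value s
  have hs : 0 < s := by simp [hs_def]; linarith
  have hlam_s : lam * s = 1 := by
    rw [hs_def, hlam]; linear_combination (1/4) * hr
  have hlampos : 0 < lam := by nlinarith
  have hθ2 : 1 < θ ^ 2 * (z 2 ^ 2 - z 1 * z 2) := by
    have hsE : 0 < Real.sqrt (z 2 ^ 2 - z 1 * z 2) := Real.sqrt_pos.2 hE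
    have h1 : 1 < θ * Real.sqrt (z 2 ^ 2 - z 1 * z 2) := by
      rw [div_lt_iff₀ hsE] at hθ; linarith
    have h2 : Real.sqrt (z 2 ^ 2 - z 1 * z 2) ^ 2 = z 2 ^ 2 - z 1 * z 2 :=
      Real.sq_sqrt hE.le
    nlinarith
  have hlam_lt : lam < θ * z 2 := by
    by_contra h
    push_neg at h
    have key : 0 ≤ (lam - θ * z 2) * (lam + θ * z 2 - θ * z 1) := by
      apply mul_nonneg (by linarith)
      nlinarith
    nlinarith [hlam_s, hθ2]
  have hmono : ∀ i, 2 ≤ i → i ≤ n → z 2 ≤ z i := by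
    intro i hi
    induction i, hi using Nat.le_induction with
    | base => intro _; exact le_rfl
    | succ m hm ih =>
      intro hmn
      have h1 := hsort m (by omega) (by omega)
      have h2 := ih (by omega)
      linarith
  set wstar : ℕ → ℝ := fun i => if i = 1 then s else 0 with hwstar_def
  clear_value wstar
  have hws0 : ∀ i ∈ K, 0 ≤ wstar i := by
    intro i _; simp only [hwstar_def]; split
    exacts [hs.le, le_rfl]
  have hsum1 : ∑ i ∈ K, wstar i = s := by
    simp only [hwstar_def]
    rw [Finset.sum_ite_eq' K 1 (fun _ => s)]
    simp [h1K]
  have hsum1z : ∑ i ∈ K, wstar i * z i = s * z 1 := by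
    simp only [hwstar_def, ite_mul, zero_mul]
    rw [Finset.sum_ite_eq' K 1 (fun i => s * z i)]
    simp [h1K]
  have hsum1sq : ∑ i ∈ K, (wstar i) ^ 2 = s ^ 2 := by
    simp only [hwstar_def]
    have : ∀ i, (if i = 1 then s else 0) ^ 2 = if i = 1 then s ^ 2 else 0 := by
      intro i; split <;> simp
    simp_rw [this]
    rw [Finset.sum_ite_eq' K 1 (fun _ => s ^ 2)]
    simp [h1K]
  -- Step A : wstar is a global minimizer
  have hA : ∀ v : ℕ → ℝ, (∀ i ∈ K, 0 ≤ v i) → 0 < ∑ i ∈ K, v i →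
      θ * (s * z 1) - Real.log s + (1/2) * s ^ 2 ≤
      θ * (∑ i ∈ K, v i * z i) - Real.log (∑ i ∈ K, v i)
        + (1/2) * ∑ i ∈ K, (v i) ^ 2 := by
    intro v hv0 hvt
    set t := ∑ i ∈ K, v i with ht_def
    clear_value t
    have hlog : Real.log t - Real.log s ≤ lam * t - 1 := by
      have h1 : Real.log (t / s) ≤ t / s - 1 := Real.log_le_sub_one_of_pos (by positivity)
      rw [Real.log_div (ne_of_gt hvt) (ne_of_gt hs)] at h1
      have h2 : t / s = lam * t := by
        rw [div_eq_iff (ne_of_gt hs)]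
        linear_combination (-t) * hlam_s
      rw [h2] at h1; linarith
    have hterm : ∀ i ∈ K, (if i = 1 then -(1/2) * s ^ 2 else 0) ≤
        (θ * z i - lam) * v i + (1/2) * (v i) ^ 2 := by
      intro i hiK
      by_cases hi1 : i = 1
      · subst hi1
        rw [if_pos rfl]
        have h1 : θ * z 1 - lam = -s := by rw [hs_def]; ring
        rw [h1]
        nlinarith [sq_nonneg (v 1 - s)]
      · simp only [if_neg hi1]
        have hi2 : 2 ≤ i := by
          rcases Finset.mem_Icc.1 hiK with ⟨h1, _⟩; omega
        have hin : i ≤ n := (Finset.mem_Icc.1 hiK).2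
        have hz2i : z 2 ≤ z i := hmono i hi2 hin
        have hge : 0 ≤ θ * z i - lam := by nlinarith
        have hv := hv0 i hiK
        nlinarith [sq_nonneg (v i)]
    have hsumterm : -(1/2) * s ^ 2 ≤ ∑ i ∈ K, ((θ * z i - lam) * v i + (1/2) * (v i) ^ 2) := by
      have h1 : ∑ i ∈ K, (if i = 1 then -(1/2) * s ^ 2 else 0) = -(1/2) * s ^ 2 := by
        rw [Finset.sum_ite_eq' K 1 (fun _ => -(1/2) * s ^ 2)]
        simp [h1K]
      calc -(1/2) * s ^ 2 = ∑ i ∈ K, (if i = 1 then -(1/2) * s ^ 2 else 0) := h1.symm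
        _ ≤ _ := Finset.sum_le_sum hterm
    have hexp : ∑ i ∈ K, ((θ * z i - lam) * v i + (1/2) * (v i) ^ 2) =
        θ * (∑ i ∈ K, v i * z i) - lam * t + (1/2) * ∑ i ∈ K, (v i) ^ 2 := by
      rw [ht_def, Finset.mul_sum, Finset.mul_sum, Finset.mul_sum, ← Finset.sum_sub_distrib,
        ← Finset.sum_add_distrib]
      exact Finset.sum_congr rfl (fun i _ => by ring)
    have hsz : θ * (s * z 1) = 1 - s ^ 2 := by
      have h1 : θ * z 1 = lam - s := by rw [hs_def]; ring
      nlinarith [hlam_s]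
    rw [hexp] at hsumterm
    linarith
  -- Step B : w coincides with wstar on K
  have hFmin := hwmin wstar hws0 (by rw [hsum1]; exact hs)
  rw [hsum1, hsum1z, hsum1sq] at hFmin
  have hAw := hA w hw0 hwsum
  have hweq : ∀ i ∈ K, w i = wstar i := by
    by_contra hcon
    push_neg at hcon
    obtain ⟨i0, hi0K, hi0ne⟩ := hcon
    set v : ℕ → ℝ := fun j => (w j + wstar j) / 2 with hv_def
    have hv0 : ∀ j ∈ K, 0 ≤ v j := by
      intro j hj; simp only [hv_def]
      have := hw0 j hj; have := hws0 j hj; linarith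
    have hvsum : ∑ j ∈ K, v j = ((∑ j ∈ K, w j) + s) / 2 := by
      simp only [hv_def]
      rw [← Finset.sum_div, Finset.sum_add_distrib, hsum1]
    have hvt : 0 < ∑ j ∈ K, v j := by rw [hvsum]; positivity
    have hvz : ∑ j ∈ K, v j * z j = ((∑ j ∈ K, w j * z j) + s * z 1) / 2 := by
      simp only [hv_def]
      calc ∑ j ∈ K, (w j + wstar j) / 2 * z j
          = ∑ j ∈ K, (w j * z j + wstar j * z j) / 2 :=
            Finset.sum_congr rfl (fun j _ => by ring)
        _ = (∑ j ∈ K, (w j * z j + wstar j * z j)) / 2 := by rw [Finset.sum_div]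
        _ = ((∑ j ∈ K, w j * z j) + (∑ j ∈ K, wstar j * z j)) / 2 := by
            rw [Finset.sum_add_distrib]
        _ = ((∑ j ∈ K, w j * z j) + s * z 1) / 2 := by rw [hsum1z]
    have hvsq : ∑ j ∈ K, (v j) ^ 2 =
        ((∑ j ∈ K, (w j) ^ 2) + s ^ 2) / 2 - ∑ j ∈ K, ((w j - wstar j) / 2) ^ 2 := by
      simp only [hv_def]
      calc ∑ j ∈ K, ((w j + wstar j) / 2) ^ 2
          = ∑ j ∈ K, ((w j ^ 2 + wstar j ^ 2) / 2 - ((w j - wstar j) / 2) ^ 2) :=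
            Finset.sum_congr rfl (fun j _ => by ring)
        _ = ∑ j ∈ K, (w j ^ 2 + wstar j ^ 2) / 2 - ∑ j ∈ K, ((w j - wstar j) / 2) ^ 2 :=
            Finset.sum_sub_distrib _ _
        _ = (∑ j ∈ K, (w j ^ 2 + wstar j ^ 2)) / 2 - ∑ j ∈ K, ((w j - wstar j) / 2) ^ 2 := by
            rw [Finset.sum_div]
        _ = ((∑ j ∈ K, w j ^ 2) + s ^ 2) / 2 - ∑ j ∈ K, ((w j - wstar j) / 2) ^ 2 := by
            rw [Finset.sum_add_distrib, hsum1sq]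
    have hDpos : 0 < ∑ j ∈ K, ((w j - wstar j) / 2) ^ 2 := by
      have h1 : 0 < ((w i0 - wstar i0) / 2) ^ 2 := by
        exact pow_two_pos_of_ne_zero (div_ne_zero (sub_ne_zero.2 hi0ne) two_ne_zero)
      calc 0 < ((w i0 - wstar i0) / 2) ^ 2 := h1
        _ ≤ _ := Finset.single_le_sum (f := fun j => ((w j - wstar j) / 2) ^ 2)
            (fun j _ => sq_nonneg _) hi0K
    have hlogmid : (Real.log (∑ j ∈ K, w j) + Real.log s) / 2 ≤
        Real.log (((∑ j ∈ K, w j) + s) / 2) := log_midpoint _ _ hwsum hs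
    have hlt := hwmin v hv0 hvt
    rw [hvz, hvsq, hvsum] at hlt
    linarith
  have hw1 : w 1 = s := by
    have := hweq 1 h1K
    simpa [hwstar_def] using this
  constructor
  · have hfil : K.filter (fun i => w i ≠ 0) = {1} := by
      apply Finset.ext
      intro i
      simp only [Finset.mem_filter, Finset.mem_singleton]
      constructor
      · rintro ⟨hiK, hine⟩
        by_contra hne1
        have := hweq i hiK
        simp only [hwstar_def, if_neg hne1] at this
        exact hine this
      · rintro rfl
        exact ⟨h1K, by rw [hw1]; exact ne_of_gt hs⟩
    rw [hfil]; simp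
  · rw [hw1, hs_def]
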